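/- Congruence of step with amortized equivalence: for every cost c and queues q₁ ≈ q₂, we have step c q₁ ≈ step c q₂. -/

import Mathlib

/-- The polynomial functor whose final coalgebra is the coinductive queue
interface: `quit : ℕ`, `enqueue : E → Queue`, `dequeue : ℕ × (Option E × Queue)`.
A node carries `(quit cost, dequeue cost, dequeued element)` and has children
indexed by `Option E`: `some e` is the queue after enqueuing `e`, `none` is the
successor queue after dequeuing. -/
def QueueF (E : Type) : PFunctor := ⟨ℕ × ℕ × Option E, fun _ => Option E⟩

/-- The coinductive queue interface: the final coalgebra of `QueueF`. -/
def Queue (E : Type) : Type := (QueueF E).M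

namespace Queue

variable {E : Type}

/-- The final cost. -/
def quit (q : Queue E) : ℕ := (PFunctor.M.dest q).1.1

/-- The cost of the next dequeue. -/
def deqCost (q : Queue E) : ℕ := (PFunctor.M.dest q).1.2.1

/-- The optional element returned by the next dequeue. -/
def deqElem (q : Queue E) : Option E := (PFunctor.M.dest q).1.2.2

/-- The queue after enqueuing an element. -/
def enqueue (q : Queue E) (e : E) : Queue E := (PFunctor.M.dest q).2 (some e)

/-- The successor queue after dequeuing. -/
def deqNext (q : Queue E) : Queue E := (PFunctor.M.dest q).2 none

/-- The dequeue method: a cost paired with an optional element and successor queue. -/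
def dequeue (q : Queue E) : ℕ × (Option E × Queue E) := (deqCost q, deqElem q, deqNext q)

/-- `step c q` adds cost `c` to the `quit` cost and to the cost of the first
`dequeue`, and propagates `step c` through `enqueue`. -/
def step (c : ℕ) (q : Queue E) : Queue E :=
  PFunctor.M.corec
    (fun s : ℕ × Queue E =>
      ⟨(s.1 + quit s.2, s.1 + deqCost s.2, deqElem s.2),
       fun o =>
         match o with
         | some e => (s.1, enqueue s.2 e)
         | none => (0, deqNext s.2)⟩)
    (c, q)

/-- A relation is a bisimulation if related queues have equal observations and
related successors. -/
def IsBisim (R : Queue E → Queue E → Prop) : Prop :=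
  ∀ q₁ q₂, R q₁ q₂ →
    quit q₁ = quit q₂ ∧
    (∀ e, R (enqueue q₁ e) (enqueue q₂ e)) ∧
    deqCost q₁ = deqCost q₂ ∧
    deqElem q₁ = deqElem q₂ ∧
    R (deqNext q₁) (deqNext q₂)

/-- Bisimilarity: the largest bisimulation. -/
def Bisim (q₁ q₂ : Queue E) : Prop := ∃ R, IsBisim R ∧ R q₁ q₂

/-- A relation is an amortized bisimulation if related queues have equal quit
costs, related enqueues, equal dequeued elements, and successors related after
pushing the respective dequeue costs onto them via `step`. -/
def IsAmortizedBisim (R : Queue E → Queue E → Prop) : Prop :=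
  ∀ q₁ q₂, R q₁ q₂ →
    quit q₁ = quit q₂ ∧
    (∀ e, R (enqueue q₁ e) (enqueue q₂ e)) ∧
    deqElem q₁ = deqElem q₂ ∧
    R (step (deqCost q₁) (deqNext q₁)) (step (deqCost q₂) (deqNext q₂))

/-- Amortized equivalence `≈`: the largest amortized bisimulation. -/
def AmortEquiv (q₁ q₂ : Queue E) : Prop := ∃ R, IsAmortizedBisim R ∧ R q₁ q₂

/-- The single-list specification queue, with a pending cost `c` already
`step`ped onto it.  `quit (QUEUEaux (c, l)) = c`; enqueue costs `1` (added to
the pending cost) and appends to the end; dequeue costs the pending cost and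
removes the head. -/
def QUEUEaux : ℕ × List E → Queue E :=
  PFunctor.M.corec fun s =>
    match s with
    | (c, []) =>
      ⟨(c, c, none), fun o =>
        match o with
        | some e => (c + 1, [e])
        | none => (0, [])⟩
    | (c, e :: l) =>
      ⟨(c, c, some e), fun o =>
        match o with
        | some e' => (c + 1, e :: (l ++ [e']))
        | none => (0, l)⟩

/-- The single-list specification queue: `quit` costs 0, `enqueue e` is
`step 1` of the queue on `l ++ [e]`, `dequeue` costs 0 and removes the head. -/
def QUEUE (l : List E) : Queue E := QUEUEaux (0, l)

/-- The batched queue on state `(bl, fl)`: `quit` pays the potential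
`length bl`; `enqueue` conses onto `bl` for free; `dequeue` pops the head of
`fl` for free, or, if `fl` is empty, reverses `bl` at cost `length bl`. -/
def batchedQueue : List E × List E → Queue E :=
  PFunctor.M.corec fun s =>
    match s with
    | (bl, e :: fl) =>
      ⟨(bl.length, 0, some e), fun o =>
        match o with
        | some e' => (e' :: bl, e :: fl)
        | none => (bl, fl)⟩
    | (bl, []) =>
      match bl.reverse with
      | [] =>
        ⟨(bl.length, 0, none), fun o =>
          match o with
          | some e' => (e' :: bl, [])
          | none => ([], [])⟩
      | e :: fl' =>
        ⟨(bl.length, bl.length, some e), fun o =>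
          match o with
          | some e' => (e' :: bl, [])
          | none => ([], fl')⟩

end Queue

/-- Finite queue programs: return, enqueue an element and continue, or dequeue
and continue with a cost and program depending on the dequeued element. -/
inductive Program (E : Type) : Type
  | ret : Program E
  | enq : E → Program E → Program E
  | deq : (Option E → ℕ) → (Option E → Program E) → Program E

namespace Queue

/-- Evaluation of a program on a queue, summing all incurred costs including
the final `quit` cost. -/
def psi {E : Type} : Program E → Queue E → ℕ
  | .ret, q => quit q
  | .enq e p, q => psi p (enqueue q e)
  | .deq c f, q =>
    deqCost q + c (deqElem q) + psi (f (deqElem q)) (deqNext q)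

end Queue

namespace Queue

variable {E : Type}

lemma obj_ext {h₁ h₂ : ℕ × ℕ × Option E} {f₁ f₂ : Option E → Queue E}
    (hh : h₁ = h₂) (hf : ∀ o, f₁ o = f₂ o) :
    (⟨h₁, f₁⟩ : (QueueF E).Obj (Queue E)) = ⟨h₂, f₂⟩ := by
  subst hh
  exact congrArg _ (funext hf)

lemma dest_step (c : ℕ) (q : Queue E) :
    PFunctor.M.dest (step c q) = ⟨(c + quit q, c + deqCost q, deqElem q),
      fun o => o.elim (step 0 (deqNext q)) (fun e => step c (enqueue q e))⟩ := by
  refine (PFunctor.M.dest_corec _ _).trans ?_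
  exact obj_ext rfl (fun o => by cases o <;> rfl)

lemma dest_eq (q : Queue E) :
    PFunctor.M.dest q = ⟨(quit q, deqCost q, deqElem q),
      fun o => o.elim (deqNext q) (fun e => enqueue q e)⟩ := by
  rcases h : PFunctor.M.dest q with ⟨⟨a, b, c⟩, f⟩
  refine obj_ext ?_ ?_
  · simp [quit, deqCost, deqElem, h]
  · rintro (_ | e)
    · show f none = (PFunctor.M.dest q).snd none
      rw [h]
    · show f (some e) = (PFunctor.M.dest q).snd (some e)
      rw [h]

lemma quit_step (c : ℕ) (q : Queue E) : quit (step c q) = c + quit q := by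
  rw [quit, dest_step]

lemma deqCost_step (c : ℕ) (q : Queue E) : deqCost (step c q) = c + deqCost q := by
  rw [deqCost, dest_step]

lemma deqElem_step (c : ℕ) (q : Queue E) : deqElem (step c q) = deqElem q := by
  rw [deqElem, dest_step]

lemma enqueue_step (c : ℕ) (q : Queue E) (e : E) :
    enqueue (step c q) e = step c (enqueue q e) := by
  rw [enqueue, dest_step]; rfl

lemma deqNext_step (c : ℕ) (q : Queue E) :
    deqNext (step c q) = step 0 (deqNext q) := by
  rw [deqNext, dest_step]; rfl

lemma step_step (a b : ℕ) (q : Queue E) : step a (step b q) = step (a + b) q := by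
  let R : Queue E → Queue E → Prop :=
    fun x y => ∃ a b q, x = step a (step b q) ∧ y = step (a + b) q
  refine PFunctor.M.bisim R ?_ _ _ ⟨a, b, q, rfl, rfl⟩
  rintro x y ⟨a, b, q, rfl, rfl⟩
  refine ⟨(a + b + quit q, a + b + deqCost q, deqElem q),
    fun o => o.elim (step 0 (step 0 (deqNext q))) (fun e => step a (step b (enqueue q e))),
    fun o => o.elim (step 0 (deqNext q)) (fun e => step (a + b) (enqueue q e)), ?_, ?_, ?_⟩
  · rw [dest_step]
    refine obj_ext ?_ ?_
    · simp [quit_step, deqCost_step, deqElem_step, add_assoc]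
    · rintro (_ | e)
      · show step 0 (deqNext (step b q)) = step 0 (step 0 (deqNext q))
        rw [deqNext_step]
      · show step a (enqueue (step b q) e) = step a (step b (enqueue q e))
        rw [enqueue_step]
  · rw [dest_step]
  · rintro (_ | e)
    · exact ⟨0, 0, deqNext q, rfl, rfl⟩
    · exact ⟨a, b, enqueue q e, rfl, rfl⟩

lemma step_zero (q : Queue E) : step 0 q = q := by
  let R : Queue E → Queue E → Prop := fun x y => x = step 0 y
  refine PFunctor.M.bisim R ?_ _ _ rfl
  rintro x y rfl
  refine ⟨(quit y, deqCost y, deqElem y),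
    fun o => o.elim (step 0 (deqNext y)) (fun e => step 0 (enqueue y e)),
    fun o => o.elim (deqNext y) (fun e => enqueue y e), ?_, dest_eq y, ?_⟩
  · refine (dest_step 0 y).trans ?_
    exact obj_ext (by simp) (fun _ => rfl)
  · rintro (_ | e)
    · rfl
    · rfl

lemma amortEquiv_isBisim : IsAmortizedBisim (AmortEquiv (E := E)) := by
  rintro q₁ q₂ ⟨R, hR, hq⟩
  obtain ⟨h1, h2, h3, h4⟩ := hR q₁ q₂ hq
  exact ⟨h1, fun e => ⟨R, hR, h2 e⟩, h3, ⟨R, hR, h4⟩⟩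

end Queue

theorem step_congr_amortEquiv {E : Type} (c : ℕ) (q₁ q₂ : Queue E)
    (h : Queue.AmortEquiv q₁ q₂) :
    Queue.AmortEquiv (Queue.step c q₁) (Queue.step c q₂) := by
  refine ⟨fun x y => ∃ c q₁ q₂, Queue.AmortEquiv q₁ q₂ ∧
    x = Queue.step c q₁ ∧ y = Queue.step c q₂, ?_, c, q₁, q₂, h, rfl, rfl⟩
  rintro x y ⟨c, q₁, q₂, h, rfl, rfl⟩
  obtain ⟨h1, h2, h3, h4⟩ := Queue.amortEquiv_isBisim _ _ h
  refine ⟨?_, ?_, ?_, ?_⟩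
  · rw [Queue.quit_step, Queue.quit_step, h1]
  · intro e
    exact ⟨c, _, _, h2 e, (Queue.enqueue_step _ _ _), (Queue.enqueue_step _ _ _)⟩
  · rw [Queue.deqElem_step, Queue.deqElem_step, h3]
  · refine ⟨c, _, _, h4, ?_, ?_⟩
    · rw [Queue.deqNext_step, Queue.deqCost_step, Queue.step_step,
        Nat.add_zero, ← Queue.step_step]
    · rw [Queue.deqNext_step, Queue.deqCost_step, Queue.step_step,
        Nat.add_zero, ← Queue.step_step]
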